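/- Let V be a finite-dimensional real inner product space, U ⊆ V a subspace, B : V → V* linear, and ℓ ∈ V*. A pair (ε, u) ∈ V × U satisfies (ε, v) + ⟨B u, v⟩ = ℓ(v) for all v ∈ V and ⟨B z, ε⟩ = 0 for all z ∈ U if and only if u minimizes z ↦ ½‖R⁻¹(ℓ − B z)‖² over U and ε = R⁻¹(ℓ − B u), where R is the Riesz map of V. (Here B z is tested against ε via the bilinear form b(z,ε) = ⟨B z, ε⟩.) -/

import Mathlib

open InnerProductSpace

lemma aux_inner_symm_apply {V : Type*} [NormedAddCommGroup V] [InnerProductSpace ℝ V]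
    [FiniteDimensional ℝ V] (φ : V →L[ℝ] ℝ) (v : V) :
    ⟪(toDual ℝ V).symm φ, v⟫_ℝ = φ v := by
  rw [← toDual_apply_apply, (toDual ℝ V).apply_symm_apply]

/-- Equivalence of the constrained residual minimization problem and the
saddle-point (mixed) formulation. -/
theorem stmt_6 {V : Type*} [NormedAddCommGroup V] [InnerProductSpace ℝ V]
    [FiniteDimensional ℝ V] (U : Submodule ℝ V)
    (B : V →ₗ[ℝ] (V →L[ℝ] ℝ)) (ℓ : V →L[ℝ] ℝ)
    (ε : V) (u : V) (hu : u ∈ U) :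
    ((∀ v : V, ⟪ε, v⟫_ℝ + B u v = ℓ v) ∧ (∀ z ∈ U, B z ε = 0)) ↔
    ((∀ z ∈ U,
        (1 / 2) * ‖(toDual ℝ V).symm (ℓ - B u)‖ ^ 2
          ≤ (1 / 2) * ‖(toDual ℝ V).symm (ℓ - B z)‖ ^ 2) ∧
      ε = (toDual ℝ V).symm (ℓ - B u)) := by
  have hres : ∀ z : V, ∀ v : V, ⟪(toDual ℝ V).symm (ℓ - B z), v⟫_ℝ = ℓ v - B z v := by
    intro z v
    rw [aux_inner_symm_apply]
    simp
  constructor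
  · rintro ⟨h1, h2⟩
    have hε : ε = (toDual ℝ V).symm (ℓ - B u) := by
      apply ext_inner_right ℝ
      intro v
      rw [hres]
      have := h1 v
      linarith
    refine ⟨?_, hε⟩
    intro z hz
    have hkey : (toDual ℝ V).symm (ℓ - B z)
        = ε + (toDual ℝ V).symm (B u - B z) := by
      rw [hε, ← LinearIsometryEquiv.map_add]
      congr 1
      abel
    have horth : ⟪ε, (toDual ℝ V).symm (B u - B z)⟫_ℝ = 0 := by
      rw [real_inner_comm, aux_inner_symm_apply]
      have : B u ε - B z ε = 0 := by
        rw [h2 u hu, h2 z hz]; ring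
      simpa using this
    have hnorm : ‖(toDual ℝ V).symm (ℓ - B z)‖ ^ 2
        = ‖ε‖ ^ 2 + ‖(toDual ℝ V).symm (B u - B z)‖ ^ 2 := by
      rw [hkey, norm_add_sq_real, horth]; ring
    have h0 : (0:ℝ) ≤ ‖(toDual ℝ V).symm (B u - B z)‖ ^ 2 := by positivity
    rw [← hε]
    nlinarith
  · rintro ⟨hmin, hε⟩
    constructor
    · intro v
      rw [hε, hres]; ring
    · intro z hz
      set m := (toDual ℝ V).symm (B z) with hm
      set c := ⟪ε, m⟫_ℝ with hc
      have hineq : ∀ t : ℝ, 2 * t * c ≤ t ^ 2 * ‖m‖ ^ 2 := by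
        intro t
        have hz' : u + t • z ∈ U := U.add_mem hu (U.smul_mem t hz)
        have := hmin (u + t • z) hz'
        rw [← hε] at this
        have hkey : (toDual ℝ V).symm (ℓ - B (u + t • z)) = ε - t • m := by
          rw [hε, hm, ← LinearIsometryEquiv.map_smul, ← LinearIsometryEquiv.map_sub]
          congr 1
          rw [map_add, map_smul]
          ext v
          simp
          ring
        rw [hkey, norm_sub_sq_real, inner_smul_right, norm_smul] at this
        simp only [Real.norm_eq_abs] at this
        nlinarith [sq_abs t]
      have hc0 : c = 0 := by
        rcases eq_or_ne m 0 with hm0 | hm0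
        · simp [hc, hm0]
        · have hd : (0:ℝ) < ‖m‖ ^ 2 := pow_pos (norm_pos_iff.mpr hm0) 2
          have h1 := hineq (c / ‖m‖ ^ 2)
          have h2 := mul_le_mul_of_nonneg_right h1 hd.le
          have e1 : 2 * (c / ‖m‖ ^ 2) * c * ‖m‖ ^ 2 = 2 * c ^ 2 := by
            field_simp
          have e2 : (c / ‖m‖ ^ 2) ^ 2 * ‖m‖ ^ 2 * ‖m‖ ^ 2 = c ^ 2 := by
            field_simp
          rw [e1, e2] at h2
          nlinarith [sq_nonneg c]
      have : B z ε = c := by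
        rw [hc, real_inner_comm, hm, aux_inner_symm_apply]
      rw [this, hc0]
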